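/- Fix τ ∈ ℝ, γ, ε₂ > 0, and let q₁,...,q_N be independent real random variables with q̃ᵢ = min{τ, qᵢ} and p = (1/N)∑ᵢ E[exp(ε₂(q̃ᵢ - τ))]. Consider the exponential mechanism on the N+1+⌈1/γ⌉ scores A₁,...,A_n where Aᵢ = q̃ᵢ for i ≤ N and Aᵢ = τ otherwise (outputting index i with probability proportional to exp(ε₂Aᵢ)). Then for any δ ∈ (0,1), Pr[output score < τ - (1/ε₂)ln(1/(δp))] ≤ δ. -/

import Mathlib

open MeasureTheory ProbabilityTheory

private lemma bdd_integrable {α : Type*} [MeasurableSpace α] {μ : Measure α} [IsFiniteMeasure μ]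
    {f : α → ℝ} (hf : Measurable f) {C : ℝ} (h : ∀ x, ‖f x‖ ≤ C) : Integrable f μ :=
  Integrable.mono' (integrable_const C) hf.aestronglyMeasurable (Filter.Eventually.of_forall h)

private lemma prod_int {Ω : Type*} [MeasurableSpace Ω] (μ : Measure Ω) [IsProbabilityMeasure μ]
    {n : ℕ} (Z : Fin n → Ω → ℝ) (hm : ∀ i, Measurable (Z i)) (h0 : ∀ i ω, 0 ≤ Z i ω)
    (hind : iIndepFun Z μ) (s : Finset (Fin n)) :
    ∫ ω, ∏ i ∈ s, Z i ω ∂μ = ∏ i ∈ s, ∫ ω, Z i ω ∂μ := by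
  classical
  induction s using Finset.cons_induction with
  | empty => simp
  | cons a s ha ih =>
    have hIF : IndepFun (∏ i ∈ s, Z i) (Z a) μ :=
      hind.indepFun_finsetProd_of_notMem hm ha
    have hl : (fun ω => ∏ i ∈ Finset.cons a s ha, Z i ω)
        = (∏ i ∈ s, Z i) * Z a := by
      funext ω
      rw [Finset.prod_cons, Pi.mul_apply, Finset.prod_apply, mul_comm]
    have happ : (fun ω => (∏ i ∈ s, Z i) ω) = fun ω => ∏ i ∈ s, Z i ω :=
      funext fun ω => Finset.prod_apply ω s Z
    calc ∫ ω, ∏ i ∈ Finset.cons a s ha, Z i ω ∂μ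
        = ∫ ω, ((∏ i ∈ s, Z i) * Z a) ω ∂μ := by rw [hl]
      _ = (∫ ω, (∏ i ∈ s, Z i) ω ∂μ) * ∫ ω, Z a ω ∂μ := by
          exact hIF.integral_mul_eq_mul_integral
            (by
              rw [show (∏ i ∈ s, Z i) = fun ω => ∏ i ∈ s, Z i ω from
                funext fun ω => Finset.prod_apply ω s Z]
              exact (Finset.measurable_prod s (fun i _ => hm i)).aestronglyMeasurable)
            (hm a).aestronglyMeasurable
      _ = (∏ i ∈ s, ∫ ω, Z i ω ∂μ) * ∫ ω, Z a ω ∂μ := by rw [happ, ih]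
      _ = ∏ i ∈ Finset.cons a s ha, ∫ ω, Z i ω ∂μ := by rw [Finset.prod_cons]; ring

private lemma exp_interp (c y : ℝ) (h0 : 0 ≤ y) (h1 : y ≤ 1) :
    Real.exp (y * c) ≤ 1 + (Real.exp c - 1) * y := by
  have h := convexOn_exp.2 (Set.mem_univ c) (Set.mem_univ (0 : ℝ)) h0
    (by linarith : (0:ℝ) ≤ 1 - y) (by ring : y + (1 - y) = 1)
  simp only [smul_eq_mul, mul_zero, add_zero, Real.exp_zero] at h
  nlinarith

private lemma key_lemma {Ω : Type*} [MeasurableSpace Ω] (μ : Measure Ω) [IsProbabilityMeasure μ]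
    {n : ℕ} (Y : Fin n → Ω → ℝ) (hYm : ∀ i, Measurable (Y i))
    (hY0 : ∀ i ω, 0 < Y i ω) (hY1 : ∀ i ω, Y i ω ≤ 1)
    (hind : iIndepFun Y μ)
    (hP : 0 < ∑ i, ∫ ω, Y i ω ∂μ) :
    ∫ ω, (1 + ∑ i, Y i ω)⁻¹ ∂μ ≤ (∑ i, ∫ ω, Y i ω ∂μ)⁻¹ := by
  classical
  set P : ℝ := ∑ i, ∫ ω, Y i ω ∂μ with hPdef
  set S : Ω → ℝ := fun ω => ∑ i, Y i ω with hSdef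
  have hSm : Measurable S := Finset.measurable_sum _ fun i _ => hYm i
  have hS0 : ∀ ω, 0 ≤ S ω := fun ω => Finset.sum_nonneg fun i _ => (hY0 i ω).le
  set g : ℝ → ℝ := fun t => min (Real.log t) 0 with hgdef
  have hgm : Measurable g := Real.measurable_log.min measurable_const
  have hg0 : ∀ t, g t ≤ 0 := fun t => min_le_right _ _
  set ν : Measure ℝ := volume.restrict (Set.Ioc (0:ℝ) 1) with hνdef
  haveI : IsFiniteMeasure ν := by
    constructor
    rw [Measure.restrict_apply_univ, Real.volume_Ioc]
    exact ENNReal.ofReal_lt_top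
  -- Step 1: pointwise integral representation
  have step1 : ∀ ω, (1 + S ω)⁻¹ = ∫ t, Real.exp (S ω * g t) ∂ν := by
    intro ω
    have e1 : ∫ t, Real.exp (S ω * g t) ∂ν = ∫ t in Set.Ioc (0:ℝ) 1, t ^ (S ω) := by
      rw [hνdef]
      apply setIntegral_congr_fun measurableSet_Ioc
      intro t ht
      have hgt : g t = Real.log t := min_eq_left (Real.log_nonpos ht.1.le ht.2)
      show Real.exp (S ω * g t) = t ^ S ω
      rw [hgt, Real.rpow_def_of_pos ht.1, mul_comm]
    have e2 : ∫ t in Set.Ioc (0:ℝ) 1, t ^ (S ω) = (1 + S ω)⁻¹ := by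
      rw [← intervalIntegral.integral_of_le (zero_le_one)]
      rw [integral_rpow (Or.inl (by linarith [hS0 ω] : (-1:ℝ) < S ω))]
      rw [Real.one_rpow, Real.zero_rpow (by linarith [hS0 ω] : S ω + 1 ≠ 0)]
      rw [sub_zero, one_div, add_comm]
    rw [e1, e2]
  -- Step 2: swap integrals
  have hFm : Measurable (Function.uncurry fun (ω : Ω) (t : ℝ) => Real.exp (S ω * g t)) := by
    apply Measurable.exp
    exact (hSm.comp measurable_fst).mul (hgm.comp measurable_snd)
  have hFint : Integrable (Function.uncurry fun (ω : Ω) (t : ℝ) => Real.exp (S ω * g t))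
      (μ.prod ν) := by
    apply bdd_integrable hFm (C := 1)
    rintro ⟨ω, t⟩
    simp only [Function.uncurry, Real.norm_eq_abs, abs_of_pos (Real.exp_pos _)]
    rw [Real.exp_le_one_iff]
    exact mul_nonpos_of_nonneg_of_nonpos (hS0 ω) (hg0 t)
  have swap : ∫ ω, (1 + S ω)⁻¹ ∂μ = ∫ t, ∫ ω, Real.exp (S ω * g t) ∂μ ∂ν := by
    rw [show (fun ω => (1 + S ω)⁻¹) = fun ω => ∫ t, Real.exp (S ω * g t) ∂ν from
      funext fun ω => step1 ω]
    exact integral_integral_swap hFint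
  -- Step 3+4+5: bound the inner integral
  have inner_bound : ∀ t : ℝ, ∫ ω, Real.exp (S ω * g t) ∂μ
      ≤ Real.exp ((Real.exp (g t) - 1) * P) := by
    intro t
    set c : ℝ := g t with hcdef
    have hc0 : c ≤ 0 := hg0 t
    set Z : Fin n → Ω → ℝ := fun i => (fun y => Real.exp (y * c)) ∘ (Y i) with hZdef
    have hZm : ∀ i, Measurable (Z i) := fun i =>
      ((measurable_id.mul_const c).exp).comp (hYm i)
    have hZ0 : ∀ i ω, 0 ≤ Z i ω := fun i ω => (Real.exp_pos _).le
    have hZind : iIndepFun Z μ :=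
      hind.comp _ (fun i => (measurable_id.mul_const c).exp)
    have e3 : ∀ ω, Real.exp (S ω * c) = ∏ i, Z i ω := by
      intro ω
      rw [hSdef]
      simp only [Finset.sum_mul]
      rw [Real.exp_sum]
      rfl
    rw [show (fun ω => Real.exp (S ω * c)) = fun ω => ∏ i, Z i ω from funext e3]
    rw [prod_int μ Z hZm hZ0 hZind Finset.univ]
    -- each factor bound
    have factor : ∀ i, ∫ ω, Z i ω ∂μ ≤ Real.exp ((Real.exp c - 1) * ∫ ω, Y i ω ∂μ) := by
      intro i
      have hZint : Integrable (Z i) μ := by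
        apply bdd_integrable (hZm i) (C := 1)
        intro ω
        show ‖Real.exp (Y i ω * c)‖ ≤ 1
        rw [Real.norm_eq_abs, abs_of_pos (Real.exp_pos _), Real.exp_le_one_iff]
        exact mul_nonpos_of_nonneg_of_nonpos (hY0 i ω).le hc0
      have hYint : Integrable (Y i) μ := by
        apply bdd_integrable (hYm i) (C := 1)
        intro ω
        rw [Real.norm_eq_abs, abs_of_pos (hY0 i ω)]
        exact hY1 i ω
      have h1 : ∫ ω, Z i ω ∂μ ≤ ∫ ω, (1 + (Real.exp c - 1) * Y i ω) ∂μ := by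
        apply integral_mono hZint ((integrable_const 1).add (hYint.const_mul _))
        intro ω
        exact exp_interp c (Y i ω) (hY0 i ω).le (hY1 i ω)
      have h2 : ∫ ω, (1 + (Real.exp c - 1) * Y i ω) ∂μ
          = 1 + (Real.exp c - 1) * ∫ ω, Y i ω ∂μ := by
        rw [integral_add (integrable_const 1) (hYint.const_mul _), integral_const,
          integral_const_mul]
        simp
      have h3 := Real.add_one_le_exp ((Real.exp c - 1) * ∫ ω, Y i ω ∂μ)
      linarith
    calc ∏ i, ∫ ω, Z i ω ∂μ
        ≤ ∏ i, Real.exp ((Real.exp c - 1) * ∫ ω, Y i ω ∂μ) :=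
          Finset.prod_le_prod (fun i _ => integral_nonneg fun ω => hZ0 i ω)
            (fun i _ => factor i)
      _ = Real.exp ((Real.exp c - 1) * P) := by
          rw [← Real.exp_sum, ← Finset.mul_sum]
  -- Step 6: integrate the bound over t
  have hGint : Integrable (fun t => Real.exp ((Real.exp (g t) - 1) * P)) ν := by
    apply bdd_integrable (((hgm.exp.sub measurable_const).mul_const P).exp) (C := 1)
    intro t
    rw [Real.norm_eq_abs, abs_of_pos (Real.exp_pos _), Real.exp_le_one_iff]
    apply mul_nonpos_of_nonpos_of_nonneg _ hP.le
    have := Real.exp_le_one_iff.2 (hg0 t)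
    show Real.exp (g t) - 1 ≤ 0
    linarith
  have step6 : ∫ t, Real.exp ((Real.exp (g t) - 1) * P) ∂ν ≤ P⁻¹ := by
    have e4 : ∫ t, Real.exp ((Real.exp (g t) - 1) * P) ∂ν
        = ∫ t in Set.Ioc (0:ℝ) 1, Real.exp ((t - 1) * P) := by
      rw [hνdef]
      apply setIntegral_congr_fun measurableSet_Ioc
      intro t ht
      have hgt : g t = Real.log t := min_eq_left (Real.log_nonpos ht.1.le ht.2)
      show Real.exp ((Real.exp (g t) - 1) * P) = Real.exp ((t - 1) * P)
      rw [hgt, Real.exp_log ht.1]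
    rw [e4, ← intervalIntegral.integral_of_le (zero_le_one)]
    have e5 : ∀ t : ℝ, Real.exp ((t - 1) * P) = Real.exp (-P) * Real.exp (P * t) := by
      intro t; rw [← Real.exp_add]; ring_nf
    simp only [e5]
    rw [_root_.intervalIntegral.integral_const_mul]
    rw [_root_.intervalIntegral.integral_comp_mul_left (fun x => Real.exp x) hP.ne']
    simp only [mul_zero, mul_one, integral_exp, smul_eq_mul]
    have h1 : Real.exp (-P) * Real.exp P = 1 := by rw [← Real.exp_add]; simp
    have h2 : (0:ℝ) < Real.exp (-P) := Real.exp_pos _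
    have h3 : (0:ℝ) < P⁻¹ := inv_pos.2 hP
    rw [Real.exp_zero]
    nlinarith
  rw [swap]
  calc ∫ t, ∫ ω, Real.exp (S ω * g t) ∂μ ∂ν
      ≤ ∫ t, Real.exp ((Real.exp (g t) - 1) * P) ∂ν := by
        apply integral_mono_of_nonneg
        · exact Filter.Eventually.of_forall fun t => integral_nonneg fun ω => (Real.exp_pos _).le
        · exact hGint
        · exact Filter.Eventually.of_forall fun t => inner_bound t
    _ ≤ P⁻¹ := step6

/-- Utility of the padded exponential mechanism.  Fix `τ ∈ ℝ`, `γ, ε₂ > 0`, and let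
`q₁, …, q_N` be independent real random variables, `q̃ᵢ = min {τ, qᵢ}`, and
`p = (1/N)·∑ᵢ E[exp(ε₂(q̃ᵢ - τ))]`.  Run the exponential mechanism on the
`n = N + 1 + ⌈1/γ⌉` scores `Aᵢ` with `Aᵢ = q̃ᵢ` for `i ≤ N` and `Aᵢ = τ` for the
dummy indices, selecting index `i` with probability proportional to `exp(ε₂ Aᵢ)`.
Then for any `δ ∈ (0,1)`, the probability (over both the `qᵢ` and the mechanism's
selection) that the output score is below `τ - (1/ε₂)·ln(1/(δp))` is at most `δ`. -/
theorem stmt18 {Ω : Type*} [MeasurableSpace Ω] (μ : Measure Ω) [IsProbabilityMeasure μ]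
    (N m : ℕ) (hN : 1 ≤ N) (γ ε₂ τ δ : ℝ)
    (hγ : 0 < γ) (hε₂ : 0 < ε₂) (hδ : δ ∈ Set.Ioo (0 : ℝ) 1)
    (hm : m = 1 + ⌈1 / γ⌉₊)
    (q : Fin N → Ω → ℝ) (hmeas : ∀ i, Measurable (q i))
    (hindep : iIndepFun q μ)
    (p : ℝ)
    (hp : p = (1 / (N : ℝ)) * ∑ i, ∫ ω, Real.exp (ε₂ * (min τ (q i ω) - τ)) ∂μ)
    (A : (Fin N ⊕ Fin m) → Ω → ℝ)
    (hA : ∀ i ω, A (Sum.inl i) ω = min τ (q i ω))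
    (hA' : ∀ j ω, A (Sum.inr j) ω = τ) :
    (∫ ω, (∑ i : Fin N ⊕ Fin m,
        if A i ω < τ - (1 / ε₂) * Real.log (1 / (δ * p)) then Real.exp (ε₂ * A i ω)
        else 0) / (∑ i : Fin N ⊕ Fin m, Real.exp (ε₂ * A i ω)) ∂μ) ≤ δ := by
  obtain ⟨hδ0, hδ1⟩ := hδ
  haveI : Nonempty (Fin N) := ⟨⟨0, hN⟩⟩
  have hNpos : (0:ℝ) < N := by exact_mod_cast hN
  set Y : Fin N → Ω → ℝ := fun i => (fun x => Real.exp (ε₂ * (min τ x - τ))) ∘ (q i) with hYdef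
  have hφm : Measurable (fun x : ℝ => Real.exp (ε₂ * (min τ x - τ))) :=
    (measurable_const.mul ((measurable_const.min measurable_id).sub measurable_const)).exp
  have hYm : ∀ i, Measurable (Y i) := fun i => hφm.comp (hmeas i)
  have hY0 : ∀ i ω, 0 < Y i ω := fun i ω => Real.exp_pos _
  have hY1 : ∀ i ω, Y i ω ≤ 1 := fun i ω =>
    Real.exp_le_one_iff.2
      (mul_nonpos_of_nonneg_of_nonpos hε₂.le (sub_nonpos.2 (min_le_left _ _)))
  have hYind : iIndepFun Y μ := hindep.comp _ (fun _ => hφm)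
  have hYint : ∀ i, Integrable (Y i) μ := fun i =>
    bdd_integrable (hYm i) (C := 1) (fun ω => by
      rw [Real.norm_eq_abs, abs_of_pos (hY0 i ω)]; exact hY1 i ω)
  have hpi_pos : ∀ i, 0 < ∫ ω, Y i ω ∂μ := by
    intro i
    rw [integral_pos_iff_support_of_nonneg_ae
      (Filter.Eventually.of_forall fun ω => (hY0 i ω).le) (hYint i)]
    have hs : Function.support (Y i) = Set.univ := Set.eq_univ_of_forall fun ω => (hY0 i ω).ne'
    rw [hs]
    simp
  have hpi_le : ∀ i, ∫ ω, Y i ω ∂μ ≤ 1 := by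
    intro i
    calc ∫ ω, Y i ω ∂μ ≤ ∫ _, (1:ℝ) ∂μ :=
          integral_mono (hYint i) (integrable_const 1) (fun ω => hY1 i ω)
      _ = 1 := by simp
  have hP : 0 < ∑ i, ∫ ω, Y i ω ∂μ :=
    Finset.sum_pos (fun i _ => hpi_pos i) Finset.univ_nonempty
  have hPsum : ∑ i, ∫ ω, Y i ω ∂μ = N * p := by
    rw [hp]
    have he : ∑ i, ∫ ω, Y i ω ∂μ
        = ∑ i, ∫ ω, Real.exp (ε₂ * (min τ (q i ω) - τ)) ∂μ := rfl
    rw [he]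
    field_simp
  have hppos : 0 < p := by
    have := hP
    rw [hPsum] at this
    nlinarith
  have hple : p ≤ 1 := by
    have hsle : ∑ i, ∫ ω, Y i ω ∂μ ≤ N := by
      calc ∑ i, ∫ ω, Y i ω ∂μ ≤ ∑ _i : Fin N, (1:ℝ) :=
            Finset.sum_le_sum fun i _ => hpi_le i
        _ = N := by simp
    rw [hPsum] at hsle
    nlinarith
  have hδp0 : 0 < δ * p := mul_pos hδ0 hppos
  have hδp1 : δ * p < 1 := by nlinarith
  set T : ℝ := τ - (1 / ε₂) * Real.log (1 / (δ * p)) with hT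
  have hlogpos : 0 < Real.log (1 / (δ * p)) := Real.log_pos ((one_lt_div hδp0).2 hδp1)
  have hTlt : T < τ := by
    rw [hT]
    have : 0 < (1 / ε₂) * Real.log (1 / (δ * p)) := by positivity
    linarith
  set eτ : ℝ := Real.exp (ε₂ * τ) with heτdef
  have heτ : (0:ℝ) < eτ := Real.exp_pos _
  have hexpT : Real.exp (ε₂ * T) = δ * p * eτ := by
    rw [hT]
    have harg : ε₂ * (τ - (1 / ε₂) * Real.log (1 / (δ * p)))
        = ε₂ * τ + Real.log (δ * p) := by
      rw [one_div (δ * p), Real.log_inv]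
      field_simp
      ring
    rw [harg, Real.exp_add, Real.exp_log hδp0, heτdef]
    ring
  set S : Ω → ℝ := fun ω => ∑ i, Y i ω with hSdef
  have hSm : Measurable S := Finset.measurable_sum _ fun i _ => hYm i
  have hS0 : ∀ ω, 0 ≤ S ω := fun ω => Finset.sum_nonneg fun i _ => (hY0 i ω).le
  have hden : ∀ ω, (∑ i : Fin N ⊕ Fin m, Real.exp (ε₂ * A i ω)) = eτ * (S ω + m) := by
    intro ω
    rw [Fintype.sum_sum_type]
    have h1 : ∀ i : Fin N, Real.exp (ε₂ * A (Sum.inl i) ω) = eτ * Y i ω := by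
      intro i
      rw [hA i ω]
      show Real.exp (ε₂ * min τ (q i ω)) = eτ * Real.exp (ε₂ * (min τ (q i ω) - τ))
      rw [heτdef, ← Real.exp_add]
      congr 1
      ring
    have h2 : ∀ j : Fin m, Real.exp (ε₂ * A (Sum.inr j) ω) = eτ := by
      intro j; rw [hA' j ω]
    rw [Finset.sum_congr rfl (fun i _ => h1 i), Finset.sum_congr rfl (fun j _ => h2 j),
      ← Finset.mul_sum, Finset.sum_const, Finset.card_univ, Fintype.card_fin, nsmul_eq_mul]
    ring
  have hnum : ∀ ω, (∑ i : Fin N ⊕ Fin m,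
      if A i ω < T then Real.exp (ε₂ * A i ω) else 0) ≤ N * (δ * p * eτ) := by
    intro ω
    rw [Fintype.sum_sum_type]
    have h2 : (∑ j : Fin m, if A (Sum.inr j) ω < T then Real.exp (ε₂ * A (Sum.inr j) ω) else 0)
        = 0 := by
      apply Finset.sum_eq_zero
      intro j _
      rw [if_neg]
      rw [hA' j ω]
      exact not_lt.2 hTlt.le
    have h1 : ∀ i : Fin N,
        (if A (Sum.inl i) ω < T then Real.exp (ε₂ * A (Sum.inl i) ω) else 0) ≤ δ * p * eτ := by
      intro i
      split_ifs with h
      · calc Real.exp (ε₂ * A (Sum.inl i) ω) ≤ Real.exp (ε₂ * T) :=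
              Real.exp_le_exp.2 (mul_le_mul_of_nonneg_left h.le hε₂.le)
          _ = δ * p * eτ := hexpT
      · positivity
    calc (∑ i : Fin N, if A (Sum.inl i) ω < T then Real.exp (ε₂ * A (Sum.inl i) ω) else 0)
          + (∑ j : Fin m, if A (Sum.inr j) ω < T then Real.exp (ε₂ * A (Sum.inr j) ω) else 0)
        ≤ (∑ _i : Fin N, δ * p * eτ) + 0 :=
          add_le_add (Finset.sum_le_sum fun i _ => h1 i) (le_of_eq h2)
      _ = N * (δ * p * eτ) := by
          rw [add_zero, Finset.sum_const, Finset.card_univ, Fintype.card_fin, nsmul_eq_mul]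
  have hm1 : (1:ℝ) ≤ (m:ℝ) := by
    have : 1 ≤ m := by omega
    exact_mod_cast this
  have hratio : ∀ ω, (∑ i : Fin N ⊕ Fin m,
      if A i ω < T then Real.exp (ε₂ * A i ω) else 0) /
      (∑ i : Fin N ⊕ Fin m, Real.exp (ε₂ * A i ω))
      ≤ (N * δ * p) * (1 + S ω)⁻¹ := by
    intro ω
    have hd2 : eτ * (1 + S ω) ≤ ∑ i : Fin N ⊕ Fin m, Real.exp (ε₂ * A i ω) := by
      rw [hden ω]
      apply mul_le_mul_of_nonneg_left _ heτ.le
      linarith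
    have h1S : (0:ℝ) < 1 + S ω := by linarith [hS0 ω]
    have step : (∑ i : Fin N ⊕ Fin m,
        if A i ω < T then Real.exp (ε₂ * A i ω) else 0) /
        (∑ i : Fin N ⊕ Fin m, Real.exp (ε₂ * A i ω))
        ≤ (N * (δ * p * eτ)) / (eτ * (1 + S ω)) :=
      div_le_div₀ (by positivity) (hnum ω) (mul_pos heτ h1S) hd2
    refine step.trans (le_of_eq ?_)
    rw [← div_eq_mul_inv, div_eq_div_iff (mul_pos heτ h1S).ne' h1S.ne']
    ring
  have hg_int : Integrable (fun ω => (N * δ * p) * (1 + S ω)⁻¹) μ := by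
    apply bdd_integrable (measurable_const.mul ((measurable_const.add hSm).inv))
      (C := N * δ * p)
    intro ω
    have h1S : (0:ℝ) < 1 + S ω := by linarith [hS0 ω]
    have hinv : (1 + S ω)⁻¹ ≤ 1 := by
      rw [inv_le_one_iff₀]
      right
      linarith [hS0 ω]
    show ‖(N * δ * p : ℝ) * (1 + S ω)⁻¹‖ ≤ N * δ * p
    rw [Real.norm_eq_abs, abs_of_nonneg (mul_nonneg (by positivity) (inv_nonneg.2 h1S.le))]
    simpa using mul_le_mul_of_nonneg_left hinv (show (0:ℝ) ≤ ↑N * δ * p by positivity)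
  calc (∫ ω, (∑ i : Fin N ⊕ Fin m,
        if A i ω < T then Real.exp (ε₂ * A i ω) else 0) /
        (∑ i : Fin N ⊕ Fin m, Real.exp (ε₂ * A i ω)) ∂μ)
      ≤ ∫ ω, (N * δ * p) * (1 + S ω)⁻¹ ∂μ := by
        apply integral_mono_of_nonneg _ hg_int (Filter.Eventually.of_forall hratio)
        apply Filter.Eventually.of_forall
        intro ω
        apply div_nonneg
        · apply Finset.sum_nonneg
          intro i _
          split_ifs
          · exact (Real.exp_pos _).le
          · exact le_rfl
        · exact Finset.sum_nonneg fun i _ => (Real.exp_pos _).le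
    _ = (N * δ * p) * ∫ ω, (1 + S ω)⁻¹ ∂μ := integral_const_mul _ _
    _ ≤ (N * δ * p) * (∑ i, ∫ ω, Y i ω ∂μ)⁻¹ := by
        apply mul_le_mul_of_nonneg_left
          (key_lemma μ Y hYm hY0 hY1 hYind hP) (by positivity)
    _ = δ := by
        rw [hPsum, mul_inv]
        field_simp
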